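/- Let (X, A) be a cross resolvable design with v points, r parallel classes, b_r blocks per parallel class, for which all cross intersection numbers μ_2, ..., μ_z exist for some z ≤ r. Fix z distinct parallel classes and t distinct blocks from each (1 ≤ t ≤ b_r), giving tz blocks A_1, ..., A_{tz} each of size k. Then the cardinality of the union A_1 ∪ ... ∪ A_{tz} equals z·t·k + Σ_{s=2}^{z} (-1)^{s+1} t^s · C(z,s) · μ_s, where C(z,s) is the binomial coefficient. -/

import Mathlib

open Finset in
private lemma mem_inf'_finset {β α : Type*} [DecidableEq α] {T : Finset β} (h : T.Nonempty)
    (f : β → Finset α) (x : α) : x ∈ T.inf' h f ↔ ∀ i ∈ T, x ∈ f i := by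
  constructor
  · intro hx i hi
    exact Finset.le_iff_subset.1 (Finset.inf'_le f hi) hx
  · intro hx
    exact Finset.singleton_subset_iff.1 <| Finset.le_iff_subset.1 <|
      Finset.le_inf' h f fun i hi => Finset.le_iff_subset.2 <|
        Finset.singleton_subset_iff.2 (hx i hi)

/-- Inclusion–exclusion for the union of `t` blocks chosen from each of `z`
distinct parallel classes of a cross resolvable design: if all blocks have size
`k`, blocks within the same class are pairwise disjoint, and any `s` chosen
blocks from `s` pairwise distinct classes (`2 ≤ s ≤ z`) intersect in exactly
`μ s` points, then
`|A₁ ∪ ⋯ ∪ A_{tz}| = z·t·k + Σ_{s=2}^{z} (-1)^{s+1} tˢ C(z,s) μ s`. -/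
theorem stmt_6 {α : Type*} [DecidableEq α] (z t k : ℕ) (ht : 1 ≤ t)
    (μ : ℕ → ℕ)
    (B : Fin z → Fin t → Finset α)
    (hsize : ∀ s j, (B s j).card = k)
    (hdisj : ∀ s, ∀ j j' : Fin t, j ≠ j' → Disjoint (B s j) (B s j'))
    (hcross : ∀ S : Finset (Fin z), 2 ≤ S.card → ∀ f : Fin z → Fin t,
      (⋂ s ∈ S, (B s (f s) : Set α)).ncard = μ S.card)
    (hμpos : ∀ s, 2 ≤ s → s ≤ z → 0 < μ s) :
    ((⋃ s, ⋃ j, (B s j : Set α)).ncard : ℤ) =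
      z * t * k + ∑ s ∈ Finset.Icc 2 z,
        (-1 : ℤ) ^ (s + 1) * (t : ℤ) ^ s * (z.choose s) * (μ s) := by
  classical
  rcases Nat.eq_zero_or_pos z with rfl | hz
  · simp
  set C : Fin z → Finset α := fun s => Finset.univ.biUnion (B s) with hC
  have hUnion : (⋃ s, ⋃ j, (B s j : Set α)) = ↑(Finset.univ.biUnion C) := by
    ext x; simp [hC]
  have hCcard : ∀ s, (C s).card = t * k := by
    intro s
    rw [hC]
    rw [Finset.card_biUnion (fun j _ j' _ hne => hdisj s j j' hne)]
    simp [hsize]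
  -- Value of the intersection of the `C s` over a nonempty set of classes
  have key : ∀ (T : Finset (Fin z)) (h : T.Nonempty),
      (T.inf' h C).card = if T.card = 1 then t * k else t ^ T.card * μ T.card := by
    intro T h
    rcases eq_or_lt_of_le (Nat.succ_le_of_lt h.card_pos) with h1 | h2
    · obtain ⟨s₀, rfl⟩ := Finset.card_eq_one.1 h1.symm
      simp [hCcard]
    · have h2' : 2 ≤ T.card := h2
      have hT1 : T.card ≠ 1 := by omega
      rw [if_neg hT1]
      have hattach : T.attach.Nonempty := by
        simpa using h
      have hdecomp : T.inf' h C =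
          (T.pi fun _ => (Finset.univ : Finset (Fin t))).biUnion
            (fun g => T.attach.inf' hattach fun s => B s.1 (g s.1 s.2)) := by
        ext x
        rw [mem_inf'_finset, Finset.mem_biUnion]
        constructor
        · intro hx
          have hx' : ∀ s ∈ T, ∃ j, x ∈ B s j := by
            intro s hs
            have := hx s hs
            simpa [hC] using this
          choose g hg using hx'
          refine ⟨g, Finset.mem_pi.2 fun a ha => Finset.mem_univ _, ?_⟩
          rw [mem_inf'_finset]
          intro s _
          exact hg s.1 s.2
        · rintro ⟨g, -, hg⟩ s hs
          rw [mem_inf'_finset] at hg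
          have : x ∈ B s (g s hs) := hg ⟨s, hs⟩ (Finset.mem_attach _ _)
          simp only [hC, Finset.mem_biUnion]
          exact ⟨g s hs, Finset.mem_univ _, this⟩
      rw [hdecomp]
      have hdisjU : ∀ g ∈ (T.pi fun _ => (Finset.univ : Finset (Fin t))),
          ∀ g' ∈ (T.pi fun _ => (Finset.univ : Finset (Fin t))), g ≠ g' →
          Disjoint (T.attach.inf' hattach fun s => B s.1 (g s.1 s.2))
            (T.attach.inf' hattach fun s => B s.1 (g' s.1 s.2)) := by
        intro g _ g' _ hne
        have hex : ∃ s, ∃ hs : s ∈ T, g s hs ≠ g' s hs := by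
          by_contra hcon
          push_neg at hcon
          exact hne (funext fun s => funext fun hs => hcon s hs)
        obtain ⟨s, hs, hgs⟩ := hex
        rw [Finset.disjoint_left]
        intro x hx hx'
        have h1 : x ∈ B s (g s hs) :=
          (mem_inf'_finset hattach _ x).1 hx ⟨s, hs⟩ (Finset.mem_attach _ _)
        have h2 : x ∈ B s (g' s hs) :=
          (mem_inf'_finset hattach _ x).1 hx' ⟨s, hs⟩ (Finset.mem_attach _ _)
        exact Finset.disjoint_left.1 (hdisj s _ _ hgs) h1 h2
      rw [Finset.card_biUnion hdisjU]
      have hterm : ∀ g ∈ (T.pi fun _ => (Finset.univ : Finset (Fin t))),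
          (T.attach.inf' hattach fun s => B s.1 (g s.1 s.2)).card = μ T.card := by
        intro g _
        set f : Fin z → Fin t := fun s => if hs : s ∈ T then g s hs else ⟨0, ht⟩ with hf
        have hset : ((T.attach.inf' hattach fun s => B s.1 (g s.1 s.2) : Finset α) : Set α)
            = ⋂ s ∈ T, (B s (f s) : Set α) := by
          ext x
          rw [Finset.mem_coe, mem_inf'_finset]
          simp only [Set.mem_iInter, Finset.mem_coe]
          constructor
          · intro hx s hs
            have := hx ⟨s, hs⟩ (Finset.mem_attach _ _)
            simpa [hf, hs] using this
          · intro hx s hs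
            have := hx s.1 s.2
            simpa [hf, s.2] using this
        have hcr := hcross T h2' f
        rw [← hset, Set.ncard_coe_finset] at hcr
        exact hcr
      rw [Finset.sum_congr rfl hterm, Finset.sum_const, Finset.card_pi]
      simp [mul_comm]
  -- now put everything together
  rw [hUnion, Set.ncard_coe_finset, Finset.inclusion_exclusion_card_biUnion]
  have G : ℕ → ℤ := fun m => ((if m = 1 then t * k else t ^ m * μ m : ℕ) : ℤ)
  set H : ℕ → ℤ := fun m =>
    if m = 0 then 0 else (-1 : ℤ) ^ (m + 1) * ((if m = 1 then t * k else t ^ m * μ m : ℕ) : ℤ)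
    with hH
  have step1 : (∑ T : {x // x ∈ Finset.filter (fun x => x.Nonempty)
        (Finset.univ : Finset (Fin z)).powerset},
      (-1 : ℤ) ^ (T.1.card + 1) * (T.1.inf' (Finset.mem_filter.1 T.2).2 C).card)
      = ∑ T ∈ Finset.filter (fun x => x.Nonempty) (Finset.univ : Finset (Fin z)).powerset,
          H T.card := by
    rw [← Finset.sum_coe_sort (Finset.filter (fun x => x.Nonempty)
        (Finset.univ : Finset (Fin z)).powerset) (fun T => H T.card)]
    apply Finset.sum_congr rfl
    rintro ⟨T, hT⟩ -
    have hTn : T.Nonempty := (Finset.mem_filter.1 hT).2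
    have hT0 : T.card ≠ 0 := by simpa using hTn.card_pos.ne'
    rw [hH]
    simp only [if_neg hT0]
    congr 1
    exact_mod_cast key T hTn
  rw [step1]
  have step2 : ∑ T ∈ Finset.filter (fun x => x.Nonempty)
      (Finset.univ : Finset (Fin z)).powerset, H T.card
      = ∑ T ∈ (Finset.univ : Finset (Fin z)).powerset, H T.card := by
    rw [Finset.sum_filter]
    apply Finset.sum_congr rfl
    intro T _
    by_cases hT : T.Nonempty
    · rw [if_pos hT]
    · rw [if_neg hT, Finset.not_nonempty_iff_eq_empty.1 hT]
      simp [hH]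
  rw [step2, Finset.sum_powerset]
  have step3 : ∀ j ∈ Finset.range ((Finset.univ : Finset (Fin z)).card + 1),
      ∑ T ∈ Finset.powersetCard j (Finset.univ : Finset (Fin z)), H T.card
        = z.choose j • H j := by
    intro j _
    rw [Finset.sum_powersetCard j (Finset.univ : Finset (Fin z)) H, Finset.card_univ,
      Fintype.card_fin]
  rw [Finset.sum_congr rfl step3, Finset.card_univ, Fintype.card_fin]
  have hsplit : Finset.range (z + 1) = insert 0 (insert 1 (Finset.Icc 2 z)) := by
    ext m
    simp only [Finset.mem_range, Finset.mem_insert, Finset.mem_Icc]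
    omega
  rw [hsplit, Finset.sum_insert (by simp), Finset.sum_insert (by simp)]
  have h0 : z.choose 0 • H 0 = 0 := by simp [hH]
  have h1 : z.choose 1 • H 1 = (z : ℤ) * t * k := by
    simp [hH]
    push_cast
    ring
  rw [h0, h1, zero_add]
  congr 1
  apply Finset.sum_congr rfl
  intro m hm
  have hm' := Finset.mem_Icc.1 hm
  have hm0 : m ≠ 0 := by omega
  have hm1 : m ≠ 1 := by omega
  rw [hH]
  simp only [if_neg hm0, if_neg hm1]
  push_cast
  ring
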